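/- Let b_1, b_2 be nontrivial planar loops in PL_0(V) with spans U_1, U_2, and let u ∈ PL_0(V). If b_1 · u · b_2 · u^{-1} is a planar loop, then U_1 = U_2 = U and u ∈ PL_0(U). -/

import Mathlib

/-!
STATEMENT 7: If `b₁, b₂` are nontrivial planar loops in `PL₀(V)` with spans `U₁, U₂`,
`u ∈ PL₀(V)`, and `b₁ · u · b₂ · u⁻¹` is a planar loop, then `U₁ = U₂ = U` and
`u ∈ PL₀(U)`.
-/

open FreeMonoid

variable (V : Type*) [AddCommGroup V] [Module ℝ V]

/-- The defining relations of `PL₀(V)`. -/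
inductive PLRel : FreeMonoid V → FreeMonoid V → Prop
  | pair (v w : V) (h : ¬ LinearIndependent ℝ ![v, w]) :
      PLRel (of v * of w) (of (v + w))
  | zero : PLRel (of (0 : V)) 1

/-- The group (as a quotient monoid) `PL₀(V)` of piecewise linear paths. -/
abbrev PL0 := (conGen (PLRel V)).Quotient

variable {V}

/-- The quotient map `FMon(V) → PL₀(V)`. -/
abbrev PLmk : FreeMonoid V →* PL0 V := (conGen (PLRel V)).mk'

/-- A minimal word: all letters nonzero, consecutive letters linearly independent. -/
def IsMinWord (l : List V) : Prop :=
  (∀ v ∈ l, v ≠ 0) ∧ l.Chain' (fun v w => LinearIndependent ℝ ![v, w])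

/-- The word representing the inverse path: reverse the word and negate each letter. -/
def invWord (l : List V) : List V := l.reverse.map (fun v => -v)

/-! ### Linear independence toolkit -/

lemma not_indep_smul (v : V) (t : ℝ) : ¬ LinearIndependent ℝ ![v, t • v] := by
  rw [LinearIndependent.pair_iff]
  push_neg
  refine ⟨t, -1, by simp, ?_⟩
  intro _
  norm_num

lemma exists_smul_of_dep {v w : V} (hv : v ≠ 0)
    (h : ¬ LinearIndependent ℝ ![v, w]) : ∃ t : ℝ, w = t • v := by
  rw [LinearIndependent.pair_iff] at h
  push_neg at h
  obtain ⟨s, t, hst, hne⟩ := h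
  rcases eq_or_ne t 0 with rfl | ht
  · rw [zero_smul, add_zero] at hst
    rcases smul_eq_zero.mp hst with hs | hv'
    · exact absurd rfl (hne hs)
    · exact absurd hv' hv
  · refine ⟨-s / t, ?_⟩
    have h2 : t • w = (-s) • v := by linear_combination (norm := module) hst
    calc w = t⁻¹ • (t • w) := by rw [smul_smul, inv_mul_cancel₀ ht, one_smul]
    _ = t⁻¹ • ((-s) • v) := by rw [h2]
    _ = (-s / t) • v := by rw [smul_smul, div_eq_inv_mul]

lemma mem_of_dep {v w : V} (hv : v ≠ 0) (h : ¬ LinearIndependent ℝ ![v, w]) :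
    w ∈ Submodule.span ℝ {v} := by
  obtain ⟨t, rfl⟩ := exists_smul_of_dep hv h
  exact Submodule.smul_mem _ _ (Submodule.mem_span_singleton_self v)

lemma dep_of_mem {v w : V} (h : w ∈ Submodule.span ℝ {v}) :
    ¬ LinearIndependent ℝ ![v, w] := by
  obtain ⟨t, rfl⟩ := Submodule.mem_span_singleton.mp h
  exact not_indep_smul v t

lemma indep_symm {v w : V} (h : LinearIndependent ℝ ![v, w]) :
    LinearIndependent ℝ ![w, v] := by
  rw [LinearIndependent.pair_iff] at h ⊢
  intro s t hst
  obtain ⟨h1, h2⟩ := h t s (by rw [← hst]; abel)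
  exact ⟨h2, h1⟩

lemma indep_neg_neg {v w : V} (h : LinearIndependent ℝ ![v, w]) :
    LinearIndependent ℝ ![-v, -w] := by
  rw [LinearIndependent.pair_iff] at h ⊢
  intro s t hst
  obtain ⟨h1, h2⟩ := h (-s) (-t) (by linear_combination (norm := module) hst)
  exact ⟨neg_eq_zero.mp h1, neg_eq_zero.mp h2⟩

/-- Dependence of nonzero vectors on a common line transfers independence. -/
lemma indep_transfer {x a b z : V} (hx : x ≠ 0) (hb : b ≠ 0)
    (haL : a ∈ Submodule.span ℝ {x}) (hbL : b ∈ Submodule.span ℝ {x})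
    (h : LinearIndependent ℝ ![a, z]) : LinearIndependent ℝ ![b, z] := by
  have ha : a ≠ 0 := by
    rintro rfl
    have := h.ne_zero 0
    simp at this
  by_contra hcon
  obtain ⟨t, rfl⟩ := exists_smul_of_dep hb hcon
  obtain ⟨c, hc⟩ := Submodule.mem_span_singleton.mp haL
  obtain ⟨d, hd⟩ := Submodule.mem_span_singleton.mp hbL
  have hc0 : c ≠ 0 := by rintro rfl; rw [zero_smul] at hc; exact ha hc.symm
  refine absurd h (dep_of_mem (Submodule.mem_span_singleton.mpr ⟨t * d / c, ?_⟩))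
  rw [← hc, ← hd, smul_smul, smul_smul]
  congr 1
  field_simp

lemma indep_of_notin_left {S : Submodule ℝ V} {x w : V} (hx : x ∉ S) (hw : w ∈ S)
    (hw0 : w ≠ 0) : LinearIndependent ℝ ![x, w] := by
  by_contra h
  have hx0 : x ≠ 0 := fun h0 => hx (h0 ▸ S.zero_mem)
  obtain ⟨t, hts⟩ := exists_smul_of_dep hx0 h
  have ht : t ≠ 0 := by rintro rfl; rw [zero_smul] at hts; exact hw0 hts
  apply hx
  have := S.smul_mem t⁻¹ hw
  rwa [hts, smul_smul, inv_mul_cancel₀ ht, one_smul] at this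

lemma indep_of_notin_right {S : Submodule ℝ V} {x w : V} (hx : x ∉ S) (hw : w ∈ S)
    (hw0 : w ≠ 0) : LinearIndependent ℝ ![w, x] := by
  by_contra h
  exact hx (Submodule.span_le.mpr (Set.singleton_subset_iff.mpr hw) (mem_of_dep hw0 h))

/-! ### The reduction step -/

open scoped Classical in
noncomputable def step (v : V) : List V → List V
  | [] => if v = 0 then [] else [v]
  | w :: t =>
    if v = 0 then w :: t
    else if LinearIndependent ℝ ![v, w] then v :: w :: t
    else if v + w = 0 then t else (v + w) :: t

noncomputable def reduce (l : List V) : List V := l.foldr step []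

@[simp] lemma step_zero (l : List V) : step (0 : V) l = l := by
  cases l <;> simp [step]

lemma step_nil {v : V} (hv : v ≠ 0) : step v ([] : List V) = [v] := by
  simp [step, hv]

lemma step_indep {v w : V} {t : List V} (hv : v ≠ 0)
    (h : LinearIndependent ℝ ![v, w]) : step v (w :: t) = v :: w :: t := by
  simp [step, hv, h]

lemma step_cancel {v w : V} {t : List V} (hv : v ≠ 0)
    (h : ¬ LinearIndependent ℝ ![v, w]) (h0 : v + w = 0) : step v (w :: t) = t := by
  simp [step, hv, h, h0]

lemma step_merge {v w : V} {t : List V} (hv : v ≠ 0)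
    (h : ¬ LinearIndependent ℝ ![v, w]) (h0 : v + w ≠ 0) :
    step v (w :: t) = (v + w) :: t := by
  simp [step, hv, h, h0]

lemma step_sum (v : V) (l : List V) : (step v l).sum = v + l.sum := by
  rcases eq_or_ne v 0 with rfl | hv
  · simp
  cases l with
  | nil => simp [step_nil hv]
  | cons w t =>
    by_cases h : LinearIndependent ℝ ![v, w]
    · simp [step_indep hv h]
    · by_cases h0 : v + w = 0
      · rw [step_cancel hv h h0, List.sum_cons, ← add_assoc, h0, zero_add]
      · rw [step_merge hv h h0, List.sum_cons, List.sum_cons, add_assoc]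

@[simp] lemma reduce_nil : reduce ([] : List V) = [] := rfl

lemma reduce_cons (v : V) (l : List V) : reduce (v :: l) = step v (reduce l) := rfl

lemma reduce_sum (l : List V) : (reduce l).sum = l.sum := by
  induction l with
  | nil => rfl
  | cons v t ih => rw [reduce_cons, step_sum, ih, List.sum_cons]

lemma reduce_append (a b : List V) : reduce (a ++ b) = a.foldr step (reduce b) := by
  rw [reduce, List.foldr_append]; rfl

/-! ### Minimality -/

lemma isMinWord_nil : IsMinWord ([] : List V) := ⟨by simp, List.isChain_nil⟩

lemma IsMinWord.of_cons {v : V} {l : List V} (h : IsMinWord (v :: l)) : IsMinWord l :=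
  ⟨fun x hx => h.1 x (List.mem_cons_of_mem v hx), (List.isChain_cons.mp h.2).2⟩

lemma IsMinWord.head_ne {v : V} {l : List V} (h : IsMinWord (v :: l)) : v ≠ 0 :=
  h.1 v (by simp)

lemma IsMinWord.head_indep {v w : V} {l : List V} (h : IsMinWord (v :: w :: l)) :
    LinearIndependent ℝ ![v, w] := (List.isChain_cons_cons.mp h.2).1

lemma IsMinWord.step {l : List V} (h : IsMinWord l) (v : V) : IsMinWord (step v l) := by
  rcases eq_or_ne v 0 with rfl | hv
  · simpa
  cases l with
  | nil =>
    rw [step_nil hv]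
    exact ⟨by simpa, List.isChain_singleton v⟩
  | cons w t =>
    by_cases hi : LinearIndependent ℝ ![v, w]
    · rw [step_indep hv hi]
      refine ⟨?_, List.isChain_cons_cons.mpr ⟨hi, h.2⟩⟩
      intro x hx
      rcases List.mem_cons.mp hx with rfl | hx'
      · exact hv
      · exact h.1 x hx'
    · by_cases h0 : v + w = 0
      · rw [step_cancel hv hi h0]; exact h.of_cons
      · rw [step_merge hv hi h0]
        refine ⟨?_, ?_⟩
        · intro x hx
          rcases List.mem_cons.mp hx with rfl | hx'
          · exact h0
          · exact h.of_cons.1 x hx'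
        rw [List.Chain', List.isChain_cons]
        refine ⟨?_, (List.isChain_cons.mp h.2).2⟩

        intro z hz
        have hwz : LinearIndependent ℝ ![w, z] := (List.isChain_cons.mp h.2).1 z hz
        have hw : w ≠ 0 := h.head_ne
        exact indep_transfer hv h0
          (mem_of_dep hv hi)
          (Submodule.add_mem _ (Submodule.mem_span_singleton_self v) (mem_of_dep hv hi))
          hwz

lemma reduce_isMin (l : List V) : IsMinWord (reduce l) := by
  induction l with
  | nil => exact isMinWord_nil
  | cons v t ih => exact ih.step v

lemma foldr_step_of_min {a b : List V} (h : IsMinWord (a ++ b)) :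
    a.foldr step b = a ++ b := by
  induction a with
  | nil => rfl
  | cons v a' ih =>
    have htail : IsMinWord (a' ++ b) := by
      rw [List.cons_append] at h; exact h.of_cons
    rw [List.foldr_cons, ih htail]
    have hv : v ≠ 0 := h.1 v (by simp)
    cases hab : a' ++ b with
    | nil => rw [step_nil hv, List.cons_append, hab]
    | cons w r =>
      have : LinearIndependent ℝ ![v, w] := by
        have h2 := h.2
        rw [List.cons_append, hab] at h2
        exact (List.isChain_cons_cons.mp h2).1
      rw [step_indep hv this, List.cons_append, hab]

lemma reduce_eq_self {l : List V} (h : IsMinWord l) : reduce l = l := by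
  have := foldr_step_of_min (a := l) (b := []) (by simpa)
  simpa [reduce] using this

/-! ### Letters of reductions -/

lemma step_mem {S : Submodule ℝ V} {v : V} {l : List V} (hv : v ∈ S)
    (hl : ∀ x ∈ l, x ∈ S) : ∀ y ∈ step v l, y ∈ S := by
  rcases eq_or_ne v 0 with rfl | hv0
  · simpa
  cases l with
  | nil => rw [step_nil hv0]; simpa
  | cons w t =>
    have hw := hl w (by simp)
    have ht : ∀ x ∈ t, x ∈ S := fun x hx => hl x (List.mem_cons_of_mem w hx)
    by_cases hi : LinearIndependent ℝ ![v, w]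
    · rw [step_indep hv0 hi]
      intro y hy
      rcases List.mem_cons.mp hy with rfl | hy'
      · exact hv
      · exact hl y hy'
    · by_cases h0 : v + w = 0
      · rw [step_cancel hv0 hi h0]; exact ht
      · rw [step_merge hv0 hi h0]
        intro y hy
        rcases List.mem_cons.mp hy with rfl | hy'
        · exact Submodule.add_mem _ hv hw
        · exact ht y hy'

lemma reduce_mem {S : Submodule ℝ V} {l : List V} (hl : ∀ x ∈ l, x ∈ S) :
    ∀ y ∈ reduce l, y ∈ S := by
  induction l with
  | nil => simpa
  | cons v t ih =>
    rw [reduce_cons]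
    exact step_mem (hl v (by simp)) (ih fun x hx => hl x (List.mem_cons_of_mem v hx))

/-- Splitting the reduction of a concatenation. -/
lemma split_reduce {S T : Submodule ℝ V} (a b : List V)
    (ha : ∀ x ∈ a, x ∈ S) (hb : ∀ x ∈ b, x ∈ T) :
    ∃ ι κ : List V, reduce (a ++ b) = ι ++ κ ∧ (∀ x ∈ ι, x ∈ S) ∧ (∀ x ∈ κ, x ∈ T) := by
  induction a with
  | nil => exact ⟨[], reduce b, by simp, by simp, reduce_mem hb⟩
  | cons z a' ih =>
    obtain ⟨ι, κ, heq, hι, hκ⟩ := ih fun x hx => ha x (List.mem_cons_of_mem z hx)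
    have hz : z ∈ S := ha z (by simp)
    have hred : reduce ((z :: a') ++ b) = step z (ι ++ κ) := by
      rw [List.cons_append, reduce_cons, heq]
    rcases eq_or_ne z 0 with rfl | hz0
    · exact ⟨ι, κ, by simpa using hred, hι, hκ⟩
    cases ι with
    | cons i it =>
      have hi : i ∈ S := hι i (by simp)
      have hit : ∀ x ∈ it, x ∈ S := fun x hx => hι x (List.mem_cons_of_mem i hx)
      replace hred : reduce ((z :: a') ++ b) = step z (i :: (it ++ κ)) := by
        rw [hred, List.cons_append]
      by_cases hind : LinearIndependent ℝ ![z, i]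
      · rw [step_indep hz0 hind] at hred
        refine ⟨z :: i :: it, κ, by simpa using hred, ?_, hκ⟩
        intro x hx
        rcases List.mem_cons.mp hx with rfl | hx'
        · exact hz
        rcases List.mem_cons.mp hx' with rfl | hx''
        · exact hi
        · exact hit x hx''
      · by_cases h0 : z + i = 0
        · rw [step_cancel hz0 hind h0] at hred
          exact ⟨it, κ, hred, hit, hκ⟩
        · rw [step_merge hz0 hind h0] at hred
          refine ⟨(z + i) :: it, κ, by simpa using hred, ?_, hκ⟩
          intro x hx
          rcases List.mem_cons.mp hx with rfl | hx'
          · exact Submodule.add_mem _ hz hi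
          · exact hit x hx'
    | nil =>
      rw [List.nil_append] at hred
      cases κ with
      | nil => exact ⟨[z], [], by rw [hred, step_nil hz0, List.append_nil], by simpa, by simp⟩
      | cons w t =>
        have hw : w ∈ T := hκ w (by simp)
        have hw0 : w ≠ 0 := by
          have := reduce_isMin (a' ++ b)
          rw [heq] at this
          exact this.head_ne
        have ht : ∀ x ∈ t, x ∈ T := fun x hx => hκ x (List.mem_cons_of_mem w hx)
        by_cases hind : LinearIndependent ℝ ![z, w]
        · rw [step_indep hz0 hind] at hred
          exact ⟨[z], w :: t, by simpa using hred, by simpa, hκ⟩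
        · by_cases h0 : z + w = 0
          · rw [step_cancel hz0 hind h0] at hred
            exact ⟨[], t, hred, by simp, ht⟩
          · rw [step_merge hz0 hind h0] at hred
            refine ⟨[z + w], t, by simpa using hred, ?_, ht⟩
            have : w ∈ Submodule.span ℝ {z} := mem_of_dep hz0 hind
            have hwS : w ∈ S :=
              Submodule.span_le.mpr (Set.singleton_subset_iff.mpr hz) this
            simpa using Submodule.add_mem _ hz hwS

/-! ### Compatibility of `step` with the defining relations -/

lemma dep_of_line {x a b : V} (hx : x ≠ 0) (ha : a ≠ 0)
    (haL : a ∈ Submodule.span ℝ {x}) (hbL : b ∈ Submodule.span ℝ {x}) :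
    ¬ LinearIndependent ℝ ![a, b] := by
  apply dep_of_mem
  obtain ⟨c, hc⟩ := Submodule.mem_span_singleton.mp haL
  have hc0 : c ≠ 0 := by rintro rfl; rw [zero_smul] at hc; exact ha hc.symm
  have hxa : x ∈ Submodule.span ℝ {a} := Submodule.mem_span_singleton.mpr
    ⟨c⁻¹, by rw [← hc, smul_smul, inv_mul_cancel₀ hc0, one_smul]⟩
  exact Submodule.span_le.mpr (Set.singleton_subset_iff.mpr hxa) hbL

lemma step_step {v w : V} (h : ¬ LinearIndependent ℝ ![v, w]) {x : List V}
    (hx : IsMinWord x) : step v (step w x) = step (v + w) x := by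
  rcases eq_or_ne v 0 with rfl | hv
  · rw [step_zero, zero_add]
  rcases eq_or_ne w 0 with rfl | hw
  · rw [step_zero, add_zero]
  have hwv : w ∈ Submodule.span ℝ {v} := mem_of_dep hv h
  have hvv : v ∈ Submodule.span ℝ {v} := Submodule.mem_span_singleton_self v
  cases x with
  | nil =>
    rw [step_nil hw]
    by_cases hvw : v + w = 0
    · rw [step_cancel hv h hvw, hvw, step_zero]
    · rw [step_merge hv h hvw, step_nil hvw]
  | cons y t =>
    have hy : y ≠ 0 := hx.head_ne
    by_cases hwy : LinearIndependent ℝ ![w, y]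
    · rw [step_indep hw hwy]
      by_cases hvw : v + w = 0
      · rw [step_cancel hv h hvw, hvw, step_zero]
      · rw [step_merge hv h hvw,
          step_indep hvw (indep_transfer hv hvw hwv (Submodule.add_mem _ hvv hwv) hwy)]
    · have hyv : y ∈ Submodule.span ℝ {v} := by
        have hymem : y ∈ Submodule.span ℝ {w} := mem_of_dep hw hwy
        exact Submodule.span_le.mpr (Set.singleton_subset_iff.mpr hwv) hymem
      by_cases hwy0 : w + y = 0
      · rw [step_cancel hw hwy hwy0]
        by_cases hvw : v + w = 0
        · have hvy : v = y := by
            have h1 : v = -w := eq_neg_of_add_eq_zero_left hvw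
            have h2 : y = -w := eq_neg_of_add_eq_zero_right hwy0
            rw [h1, h2]
          rw [hvw, step_zero, hvy]
          cases t with
          | nil => exact step_nil hy
          | cons z t' => exact step_indep hy hx.head_indep
        · have hdep2 : ¬ LinearIndependent ℝ ![v + w, y] :=
            dep_of_line hv hvw (Submodule.add_mem _ hvv hwv) hyv
          have hsum : v + w + y = v := by rw [add_assoc, hwy0, add_zero]
          have hsumne : v + w + y ≠ 0 := by rw [hsum]; exact hv
          rw [step_merge hvw hdep2 hsumne, hsum]
          cases t with
          | nil => exact step_nil hv
          | cons z t' => exact step_indep hv (indep_transfer hv hv hyv hvv hx.head_indep)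
      · rw [step_merge hw hwy hwy0]
        have hwyL : w + y ∈ Submodule.span ℝ {v} := Submodule.add_mem _ hwv hyv
        have hdep1 : ¬ LinearIndependent ℝ ![v, w + y] := dep_of_line hv hv hvv hwyL
        by_cases hvwy : v + (w + y) = 0
        · rw [step_cancel hv hdep1 hvwy]
          have hvw : v + w ≠ 0 := by
            intro h0
            apply hy
            have h1 : v + w + y = 0 := by rw [add_assoc]; exact hvwy
            rwa [h0, zero_add] at h1
          have hdep2 : ¬ LinearIndependent ℝ ![v + w, y] :=
            dep_of_line hv hvw (Submodule.add_mem _ hvv hwv) hyv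
          have h0 : v + w + y = 0 := by rw [add_assoc]; exact hvwy
          rw [step_cancel hvw hdep2 h0]
        · by_cases hvw : v + w = 0
          · rw [step_merge hv hdep1 hvwy, hvw, step_zero]
            congr 1
            rw [← add_assoc, hvw, zero_add]
          · have hdep2 : ¬ LinearIndependent ℝ ![v + w, y] :=
              dep_of_line hv hvw (Submodule.add_mem _ hvv hwv) hyv
            have h0 : v + w + y ≠ 0 := by rw [add_assoc]; exact hvwy
            rw [step_merge hv hdep1 hvwy, step_merge hvw hdep2 h0, add_assoc]

/-! ### The action on minimal words, and uniqueness of reduction -/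

noncomputable def stepEnd (v : V) : Function.End {l : List V // IsMinWord l} :=
  fun l => ⟨step v l.1, l.2.step v⟩

noncomputable def actHom : FreeMonoid V →* Function.End {l : List V // IsMinWord l} :=
  FreeMonoid.lift stepEnd

lemma actHom_of (v : V) : actHom (of v) = stepEnd v := FreeMonoid.lift_eval_of _ _

lemma conGen_le_ker : conGen (PLRel V) ≤ Con.ker (actHom (V := V)) := by
  apply Con.conGen_le.mpr
  intro a b hab
  rw [Con.ker_rel]
  cases hab with
  | pair v w hdep =>
    rw [map_mul, actHom_of, actHom_of, actHom_of]
    funext l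
    show stepEnd v (stepEnd w l) = stepEnd (v + w) l
    exact Subtype.ext (step_step hdep l.2)
  | zero =>
    rw [actHom_of, map_one]
    funext l
    exact Subtype.ext (by show step 0 l.1 = l.1; simp)

lemma actHom_ofList (l : List V) (x : {l : List V // IsMinWord l}) :
    (actHom (FreeMonoid.ofList l) x).1 = l.foldr step x.1 := by
  induction l with
  | nil =>
    show (actHom 1 x).1 = x.1
    rw [map_one]
    rfl
  | cons v t ih =>
    have hc : FreeMonoid.ofList (v :: t) = of v * FreeMonoid.ofList t := rfl
    rw [hc, map_mul]
    show (actHom (of v) ((actHom (FreeMonoid.ofList t)) x)).1 = _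
    rw [actHom_of]
    show step v ((actHom (FreeMonoid.ofList t)) x).1 = _
    rw [ih]
    rfl

lemma reduce_unique {l₁ l₂ : List V}
    (h : PLmk (FreeMonoid.ofList l₁) = PLmk (FreeMonoid.ofList l₂)) :
    reduce l₁ = reduce l₂ := by
  have hc : conGen (PLRel V) (FreeMonoid.ofList l₁) (FreeMonoid.ofList l₂) :=
    (Con.eq _).mp h
  have hk := conGen_le_ker hc
  rw [Con.ker_rel] at hk
  have h2 : (actHom (FreeMonoid.ofList l₁)
        (⟨[], isMinWord_nil⟩ : {l : List V // IsMinWord l})).1 =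
      (actHom (FreeMonoid.ofList l₂) ⟨[], isMinWord_nil⟩).1 := by rw [hk]
  rw [actHom_ofList, actHom_ofList] at h2
  exact h2

/-! ### `PLmk` computations -/

lemma PLmk_rel {a b : FreeMonoid V} (h : PLRel V a b) : PLmk a = PLmk b :=
  (Con.eq _).mpr (ConGen.Rel.of _ _ h)

lemma PLmk_ofList_append (a b : List V) :
    PLmk (FreeMonoid.ofList (a ++ b)) =
      PLmk (FreeMonoid.ofList a) * PLmk (FreeMonoid.ofList b) := by
  rw [show FreeMonoid.ofList (a ++ b) = FreeMonoid.ofList a * FreeMonoid.ofList b from rfl,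
    map_mul]

lemma PLmk_of_zero : PLmk (of (0 : V)) = 1 := by
  rw [PLmk_rel PLRel.zero, map_one]

lemma PLmk_step (v : V) (x : List V) :
    PLmk (FreeMonoid.ofList (step v x)) = PLmk (of v * FreeMonoid.ofList x) := by
  rcases eq_or_ne v 0 with rfl | hv
  · rw [step_zero, map_mul, PLmk_of_zero, one_mul]
  cases x with
  | nil =>
    rw [step_nil hv]
    rfl
  | cons w t =>
    by_cases hi : LinearIndependent ℝ ![v, w]
    · rw [step_indep hv hi]
      rfl
    · have hpair : PLmk (of v * of w) = PLmk (of (v + w)) := PLmk_rel (PLRel.pair v w hi)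
      have hassoc : of v * FreeMonoid.ofList (w :: t) =
          (of v * of w) * FreeMonoid.ofList t := rfl
      by_cases h0 : v + w = 0
      · rw [step_cancel hv hi h0, hassoc, map_mul, hpair, h0, PLmk_of_zero, one_mul]
      · rw [step_merge hv hi h0]
        have h2 : FreeMonoid.ofList ((v + w) :: t) = of (v + w) * FreeMonoid.ofList t := rfl
        rw [h2, map_mul, hassoc, map_mul, hpair]

lemma PLmk_reduce (l : List V) :
    PLmk (FreeMonoid.ofList (reduce l)) = PLmk (FreeMonoid.ofList l) := by
  induction l with
  | nil => rfl
  | cons v t ih =>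
    rw [reduce_cons, PLmk_step, map_mul, ih, ← map_mul, FreeMonoid.ofList_cons]

/-! ### Inverse words -/

@[simp] lemma invWord_nil : invWord ([] : List V) = [] := rfl

lemma invWord_cons (v : V) (l : List V) : invWord (v :: l) = invWord l ++ [-v] := by
  simp [invWord]

lemma invWord_append (a b : List V) : invWord (a ++ b) = invWord b ++ invWord a := by
  simp [invWord]

lemma invWord_sum (l : List V) : (invWord l).sum = - l.sum := by
  induction l with
  | nil => simp
  | cons v t ih => rw [invWord_cons, List.sum_append, ih, List.sum_cons]; simp

lemma invWord_mem {S : Submodule ℝ V} {l : List V} (h : ∀ v ∈ l, v ∈ S) :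
    ∀ v ∈ invWord l, v ∈ S := by
  intro v hv
  simp only [invWord, List.mem_map, List.mem_reverse] at hv
  obtain ⟨w, hw, rfl⟩ := hv
  exact S.neg_mem (h w hw)

lemma IsMinWord.invWord {l : List V} (h : IsMinWord l) : IsMinWord (invWord l) := by
  constructor
  · intro v hv
    simp only [_root_.invWord, List.mem_map, List.mem_reverse] at hv
    obtain ⟨w, hw, rfl⟩ := hv
    exact neg_ne_zero.mpr (h.1 w hw)
  · rw [_root_.invWord, List.Chain', List.isChain_map, List.isChain_reverse]
    exact List.IsChain.imp (fun a b hab => indep_neg_neg (indep_symm hab)) h.2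

lemma PLmk_inv_mul (l : List V) :
    PLmk (FreeMonoid.ofList (invWord l)) * PLmk (FreeMonoid.ofList l) = 1 := by
  induction l with
  | nil => simpa using map_one PLmk
  | cons v t ih =>
    have hdep : ¬ LinearIndependent ℝ ![-v, v] := by
      have := not_indep_smul (-v) (-1)
      simpa using this
    have hkey : PLmk (of (-v)) * PLmk (FreeMonoid.ofList (v :: t)) =
        PLmk (FreeMonoid.ofList t) := by
      have h1 : of (-v) * FreeMonoid.ofList (v :: t) =
          (of (-v) * of v) * FreeMonoid.ofList t := rfl
      rw [← map_mul, h1, map_mul, PLmk_rel (PLRel.pair (-v) v hdep),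
        neg_add_cancel, PLmk_of_zero, one_mul]
    rw [invWord_cons, PLmk_ofList_append]
    calc PLmk (FreeMonoid.ofList (invWord t)) * PLmk (FreeMonoid.ofList [-v]) *
          PLmk (FreeMonoid.ofList (v :: t))
        = PLmk (FreeMonoid.ofList (invWord t)) *
            (PLmk (of (-v)) * PLmk (FreeMonoid.ofList (v :: t))) := by
          rw [mul_assoc]; rfl
    _ = PLmk (FreeMonoid.ofList (invWord t)) * PLmk (FreeMonoid.ofList t) := by rw [hkey]
    _ = 1 := ih

lemma invWord_invWord (l : List V) : invWord (invWord l) = l := by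
  simp [invWord, List.map_reverse, List.map_map, Function.comp]

lemma PLmk_mul_inv (l : List V) :
    PLmk (FreeMonoid.ofList l) * PLmk (FreeMonoid.ofList (invWord l)) = 1 := by
  have := PLmk_inv_mul (invWord l)
  rwa [invWord_invWord] at this

lemma conj_triv {a b c : PL0 V} (hca : c * a = 1) (h : a * b * c = 1) : b = 1 := by
  have h1 : c * (a * b * c) * a = b := by
    calc c * (a * b * c) * a = (c * a) * b * (c * a) := by simp only [mul_assoc]
    _ = b := by rw [hca, one_mul, mul_one]
  rw [h, mul_one, hca] at h1
  exact h1.symm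

lemma conj_reduce_ne_nil {lq lg : List V} (hg : IsMinWord lg) (hgne : lg ≠ []) :
    reduce (lq ++ lg ++ invWord lq) ≠ [] := by
  intro h0
  have h1 : PLmk (FreeMonoid.ofList (lq ++ lg ++ invWord lq)) = 1 := by
    rw [← PLmk_reduce, h0]
    exact map_one PLmk
  rw [PLmk_ofList_append, PLmk_ofList_append] at h1
  have h2 : PLmk (FreeMonoid.ofList lg) = 1 := conj_triv (PLmk_inv_mul lq) h1
  have h3 : reduce lg = reduce ([] : List V) :=
    reduce_unique (by rw [h2]; exact (map_one PLmk).symm)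
  rw [reduce_eq_self hg, reduce_nil] at h3
  exact hgne h3

/-! ### Small combinatorial lemmas -/

lemma IsMinWord.of_append_left {a b : List V} (h : IsMinWord (a ++ b)) : IsMinWord a :=
  ⟨fun v hv => h.1 v (List.mem_append_left _ hv), (List.isChain_append.mp h.2).1⟩

lemma IsMinWord.of_append_right {a b : List V} (h : IsMinWord (a ++ b)) : IsMinWord b :=
  ⟨fun v hv => h.1 v (List.mem_append_right _ hv), (List.isChain_append.mp h.2).2.1⟩

lemma isMinWord_append {a b : List V} (ha : IsMinWord a) (hb : IsMinWord b)
    (hj : ∀ x ∈ a.getLast?, ∀ y ∈ b.head?, LinearIndependent ℝ ![x, y]) :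
    IsMinWord (a ++ b) :=
  ⟨fun v hv => (List.mem_append.mp hv).elim (ha.1 v) (hb.1 v),
    List.isChain_append.mpr ⟨ha.2, hb.2, hj⟩⟩

lemma two_le_finrank_of_pair {S : Submodule ℝ V} [FiniteDimensional ℝ V] {a b : V}
    (ha : a ∈ S) (hb : b ∈ S) (h : LinearIndependent ℝ ![a, b]) :
    2 ≤ Module.finrank ℝ S := by
  have hli : LinearIndependent ℝ (fun i : Fin 2 => (![(⟨a, ha⟩ : S), ⟨b, hb⟩] i)) := by
    apply LinearIndependent.of_comp S.subtype
    convert h using 1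
    funext i
    fin_cases i <;> rfl
  simpa using hli.fintype_card_le_finrank

lemma word_in_line_short {S : Submodule ℝ V} [FiniteDimensional ℝ V]
    (hS : Module.finrank ℝ S ≤ 1) {l : List V} (hl : IsMinWord l)
    (hm : ∀ v ∈ l, v ∈ S) : l.length ≤ 1 := by
  cases l with
  | nil => simp
  | cons a t =>
    cases t with
    | nil => simp
    | cons b r =>
      have h2 := two_le_finrank_of_pair (hm a (by simp)) (hm b (by simp)) hl.head_indep
      omega

lemma eq_nil_of_short_loop {l : List V} (hl : IsMinWord l) (hsum : l.sum = 0)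
    (hlen : l.length ≤ 2) : l = [] := by
  cases l with
  | nil => rfl
  | cons a t =>
    cases t with
    | nil => exact absurd (by simpa using hsum) hl.head_ne
    | cons b r =>
      cases r with
      | nil =>
        have hb : b = -a := by
          have h1 : a + b = 0 := by simpa using hsum
          exact eq_neg_of_add_eq_zero_right h1
        have hdep : ¬ LinearIndependent ℝ ![a, b] := by
          rw [hb, show (-a : V) = (-1 : ℝ) • a by simp]
          exact not_indep_smul a (-1)
        exact absurd hl.head_indep hdep
      | cons c s => simp at hlen

lemma loop_split_contra {S T : Submodule ℝ V} [FiniteDimensional ℝ V]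
    (hS : Module.finrank ℝ S ≤ 1) (hT : Module.finrank ℝ T ≤ 1)
    {k k₁ k₂ : List V} (hk : IsMinWord k) (hsum : k.sum = 0) (hne : k ≠ [])
    (hsplit : k = k₁ ++ k₂) (h₁ : ∀ v ∈ k₁, v ∈ S) (h₂ : ∀ v ∈ k₂, v ∈ T) : False := by
  have hk' : IsMinWord (k₁ ++ k₂) := hsplit ▸ hk
  have hl1 := word_in_line_short hS hk'.of_append_left h₁
  have hl2 := word_in_line_short hT hk'.of_append_right h₂
  have hlen : k.length ≤ 2 := by rw [hsplit, List.length_append]; omega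
  exact hne (eq_nil_of_short_loop hk hsum hlen)

lemma loop_line_contra {S : Submodule ℝ V} [FiniteDimensional ℝ V]
    (hS : Module.finrank ℝ S ≤ 1) {k : List V} (hk : IsMinWord k) (hsum : k.sum = 0)
    (hne : k ≠ []) (hm : ∀ v ∈ k, v ∈ S) : False :=
  loop_split_contra (k₁ := k) (k₂ := []) hS hS hk hsum hne (by simp) hm (by simp)

lemma inf_rank_le_one {A B : Submodule ℝ V} [FiniteDimensional ℝ V]
    (hA2 : Module.finrank ℝ A = 2) (hB2 : Module.finrank ℝ B ≤ 2) (hne : A ≠ B) :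
    Module.finrank ℝ (A ⊓ B : Submodule ℝ V) ≤ 1 := by
  have h1 : A ⊓ B ≠ A := by
    intro hE
    exact hne (Submodule.eq_of_le_of_finrank_le (inf_eq_left.mp hE) (by rw [hA2]; exact hB2))
  have hlt : A ⊓ B < A := lt_of_le_of_ne inf_le_left h1
  have h2 := Submodule.finrank_lt_finrank_of_lt hlt
  rw [hA2] at h2
  omega

lemma exists_last_not_mem {α : Type*} {P : α → Prop} {l : List α} (h : ¬ ∀ x ∈ l, P x) :
    ∃ p x q, l = (p ++ [x]) ++ q ∧ ¬ P x ∧ ∀ y ∈ q, P y := by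
  induction l with
  | nil => exact absurd (by simp) h
  | cons a t ih =>
    by_cases hat : ∀ x ∈ t, P x
    · have hPa : ¬ P a := by
        intro hPa
        apply h
        intro x hx
        rcases List.mem_cons.mp hx with rfl | hx'
        exacts [hPa, hat x hx']
      exact ⟨[], a, t, by simp, hPa, hat⟩
    · obtain ⟨p, x, q, h1, h2, h3⟩ := ih hat
      exact ⟨a :: p, x, q, by rw [h1]; simp, h2, h3⟩

lemma split_three {α : Type*} {A k B ι κ : List α} (h : A ++ (k ++ B) = ι ++ κ) :
    ∃ k₁ k₂, k = k₁ ++ k₂ ∧ (∀ x ∈ k₁, x ∈ ι) ∧ (∀ x ∈ k₂, x ∈ κ) := by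
  rcases List.append_eq_append_iff.mp h with ⟨a', ha1, ha2⟩ | ⟨c', _, hc2⟩
  · rcases List.append_eq_append_iff.mp ha2 with ⟨w, hw1, _⟩ | ⟨w, hw1, hw2⟩
    · exact ⟨k, [], by simp, fun x hx => by rw [ha1, hw1]; simp [hx], by simp⟩
    · exact ⟨a', w, hw1, fun x hx => by rw [ha1]; simp [hx],
        fun x hx => by rw [hw2]; simp [hx]⟩
  · exact ⟨[], k, by simp, by simp, fun x hx => by rw [hc2]; simp [hx]⟩

theorem composition_of_kites [FiniteDimensional ℝ V]
    (lb₁ lb₂ lu : List V)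
    (h₁min : IsMinWord lb₁) (h₁sum : lb₁.sum = 0)
    (h₁2 : Module.finrank ℝ (Submodule.span ℝ {v | v ∈ lb₁}) = 2)
    (h₂min : IsMinWord lb₂) (h₂sum : lb₂.sum = 0)
    (h₂2 : Module.finrank ℝ (Submodule.span ℝ {v | v ∈ lb₂}) = 2)
    (humin : IsMinWord lu)
    -- `b₁ · u · b₂ · u⁻¹` is a planar loop:
    (hprod : ∃ m : List V, IsMinWord m ∧ m.sum = 0 ∧
        Module.finrank ℝ (Submodule.span ℝ {v | v ∈ m}) ≤ 2 ∧
        PLmk (FreeMonoid.ofList m) =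
          PLmk (FreeMonoid.ofList (lb₁ ++ lu ++ lb₂ ++ invWord lu))) :
    Submodule.span ℝ {v | v ∈ lb₁} = Submodule.span ℝ {v | v ∈ lb₂} ∧
    ∀ v ∈ lu, v ∈ Submodule.span ℝ {u | u ∈ lb₁} := by
  classical
  obtain ⟨m, hmmin, hmsum, hm2, hmeq⟩ := hprod
  set U₁ := Submodule.span ℝ {v : V | v ∈ lb₁} with hU₁def
  set U₂ := Submodule.span ℝ {v : V | v ∈ lb₂} with hU₂def
  set W := Submodule.span ℝ {v : V | v ∈ m} with hWdef
  have hlb₁U : ∀ v ∈ lb₁, v ∈ U₁ := fun v hv => Submodule.subset_span hv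
  have hlb₂U : ∀ v ∈ lb₂, v ∈ U₂ := fun v hv => Submodule.subset_span hv
  have hmW : ∀ v ∈ m, v ∈ W := fun v hv => Submodule.subset_span hv
  have hb₂ne : lb₂ ≠ [] := by
    rintro rfl
    have hbot : U₂ = ⊥ := by
      rw [hU₂def, show {v : V | v ∈ ([] : List V)} = (∅ : Set V) by simp,
        Submodule.span_empty]
    rw [hbot, finrank_bot] at h₂2
    omega
  -- the group identity
  have hmeq' : PLmk (FreeMonoid.ofList m) =
      ((PLmk (FreeMonoid.ofList lb₁) * PLmk (FreeMonoid.ofList lu)) *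
        PLmk (FreeMonoid.ofList lb₂)) * PLmk (FreeMonoid.ofList (invWord lu)) := by
    rw [hmeq, PLmk_ofList_append, PLmk_ofList_append, PLmk_ofList_append]
  set lc := reduce (lu ++ lb₂ ++ invWord lu) with hlcdef
  have hlcmin : IsMinWord lc := reduce_isMin _
  have hlcg : PLmk (FreeMonoid.ofList lc) =
      (PLmk (FreeMonoid.ofList lu) * PLmk (FreeMonoid.ofList lb₂)) *
        PLmk (FreeMonoid.ofList (invWord lu)) := by
    rw [hlcdef, PLmk_reduce, PLmk_ofList_append, PLmk_ofList_append]
  have hlcne : lc ≠ [] := conj_reduce_ne_nil h₂min hb₂ne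
  have hlcsum : lc.sum = 0 := by
    rw [hlcdef, reduce_sum, List.sum_append, List.sum_append, h₂sum, invWord_sum]
    simp
  have hmfact : PLmk (FreeMonoid.ofList m) =
      PLmk (FreeMonoid.ofList lb₁) * PLmk (FreeMonoid.ofList lc) := by
    rw [hmeq', hlcg]
    simp only [mul_assoc]
  -- `lc` is also the reduction of `invWord lb₁ ++ m`
  have hE2 : reduce (invWord lb₁ ++ m) = lc := by
    have hg : PLmk (FreeMonoid.ofList (invWord lb₁ ++ m)) =
        PLmk (FreeMonoid.ofList lc) := by
      rw [PLmk_ofList_append, hmfact, ← mul_assoc, PLmk_inv_mul, one_mul]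
    have h4 := reduce_unique hg
    rwa [reduce_eq_self hlcmin] at h4
  obtain ⟨ι, κ, hsplit0, hι, hκ⟩ :=
    split_reduce (S := U₁) (T := W) (invWord lb₁) m (invWord_mem hlb₁U) hmW
  rw [hE2] at hsplit0
  -- STEP I : all letters of `lu` lie in `U₂`
  have hluU₂ : ∀ v ∈ lu, v ∈ U₂ := by
    by_contra hcon
    obtain ⟨p, x, q, hlu_eq, hxU₂, hqU₂⟩ := exists_last_not_mem hcon
    rw [hlu_eq] at humin
    have hpxmin : IsMinWord (p ++ [x]) := humin.of_append_left
    have hpmin : IsMinWord p := hpxmin.of_append_left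
    have hx0 : x ≠ 0 := hpxmin.1 x (by simp)
    have hjunc : ∀ a ∈ p.getLast?, LinearIndependent ℝ ![a, x] := by
      have h3 := (List.isChain_append.mp hpxmin.2).2.2
      intro a ha
      exact h3 a ha x (by simp)
    set k := reduce (q ++ lb₂ ++ invWord q) with hkdef
    have hkmin : IsMinWord k := reduce_isMin _
    have hkne : k ≠ [] := conj_reduce_ne_nil h₂min hb₂ne
    have hkU₂ : ∀ v ∈ k, v ∈ U₂ := by
      rw [hkdef]
      apply reduce_mem
      intro v hv
      rcases List.mem_append.mp hv with hv1 | hv2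
      · rcases List.mem_append.mp hv1 with h | h
        · exact hqU₂ v h
        · exact hlb₂U v h
      · exact invWord_mem hqU₂ v hv2
    have hksum : k.sum = 0 := by
      rw [hkdef, reduce_sum, List.sum_append, List.sum_append, h₂sum, invWord_sum]
      simp
    have hkg : PLmk (FreeMonoid.ofList k) = PLmk (FreeMonoid.ofList q) *
        (PLmk (FreeMonoid.ofList lb₂) * PLmk (FreeMonoid.ofList (invWord q))) := by
      rw [hkdef, PLmk_reduce, PLmk_ofList_append, PLmk_ofList_append, mul_assoc]
    obtain ⟨kh, kt, hk_eq⟩ := List.exists_cons_of_ne_nil hkne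
    have hnegxU₂ : -x ∉ U₂ := fun h => hxU₂ (by simpa using U₂.neg_mem h)
    -- minimality of the candidate normal form
    have hnegxmin : IsMinWord [-x] := ⟨by simpa using hx0, List.isChain_singleton _⟩
    have hxmin : IsMinWord [x] := ⟨by simpa using hx0, List.isChain_singleton _⟩
    have hDE : IsMinWord ([-x] ++ invWord p) := by
      apply isMinWord_append hnegxmin hpmin.invWord
      intro a ha y hy
      have ha' : a = -x := (show -x = a by simpa using ha).symm
      have hhead : (invWord p).head? = p.getLast?.map (fun v => -v) := by
        rw [invWord, List.head?_map, List.head?_reverse]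
      rw [hhead] at hy
      rw [Option.mem_def, Option.map_eq_some_iff] at hy
      obtain ⟨b, hb, hfb⟩ := hy
      rw [ha', ← hfb]
      exact indep_neg_neg (indep_symm (hjunc b (Option.mem_def.mpr hb)))
    have hCDE : IsMinWord (k ++ ([-x] ++ invWord p)) := by
      apply isMinWord_append hkmin hDE
      intro a ha y hy
      have hy' : y = -x := (show -x = y by simpa using hy).symm
      have hamem : a ∈ k := by
        obtain ⟨hne', ha'⟩ := List.mem_getLast?_eq_getLast ha
        rw [ha']
        exact List.getLast_mem hne'
      rw [hy']
      exact indep_of_notin_right hnegxU₂ (hkU₂ a hamem) (hkmin.1 a hamem)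
    have hBCDE : IsMinWord ([x] ++ (k ++ ([-x] ++ invWord p))) := by
      apply isMinWord_append hxmin hCDE
      intro a ha y hy
      have ha' : a = x := (show x = a by simpa using ha).symm
      have hy' : y = kh := by
        rw [hk_eq] at hy
        exact (show kh = y by simpa using hy).symm
      rw [ha', hy']
      have hkh : kh ∈ k := by rw [hk_eq]; simp
      exact indep_of_notin_left hxU₂ (hkU₂ kh hkh) (hkmin.1 kh hkh)
    have hcandmin : IsMinWord (p ++ ([x] ++ (k ++ ([-x] ++ invWord p)))) := by
      apply isMinWord_append hpmin hBCDE
      intro a ha y hy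
      have hy' : y = x := (show x = y by simpa using hy).symm
      rw [hy']
      exact hjunc a ha
    -- the candidate has the same image in `PL₀(V)` as `lc`
    have hinvx : invWord [x] = [-x] := rfl
    have hinvlu : invWord ((p ++ [x]) ++ q) = invWord q ++ ([-x] ++ invWord p) := by
      rw [invWord_append, invWord_append, hinvx]
    have hcandg : PLmk (FreeMonoid.ofList (p ++ ([x] ++ (k ++ ([-x] ++ invWord p))))) =
        PLmk (FreeMonoid.ofList (lu ++ lb₂ ++ invWord lu)) := by
      rw [hlu_eq, hinvlu]
      simp only [PLmk_ofList_append, hkg, mul_assoc]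
    have hE3 : lc = p ++ ([x] ++ (k ++ ([-x] ++ invWord p))) := by
      have h5 := reduce_unique hcandg
      rw [reduce_eq_self hcandmin] at h5
      rw [hlcdef, ← h5]
    -- the decomposition equation
    have hform : (p ++ [x]) ++ (k ++ ([-x] ++ invWord p)) = ι ++ κ := by
      rw [← hsplit0, hE3]
      simp only [List.append_assoc]
    by_cases hU12 : U₁ = U₂
    · -- branch (a)
      have hxU₁ : x ∉ U₁ := by rw [hU12]; exact hxU₂
      rcases List.append_eq_append_iff.mp hform with ⟨a', ha1, _⟩ | ⟨c', _, hc2⟩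
      · exact absurd (hι x (by rw [ha1]; simp)) hxU₁
      · have hkW : ∀ v ∈ k, v ∈ W := fun v hv => hκ v (by rw [hc2]; simp [hv])
        have hxlc : x ∈ lc := by rw [hE3]; simp
        have hxW : x ∈ W := by
          rcases List.mem_append.mp (hsplit0 ▸ hxlc) with h | h
          · exact absurd (hι x h) hxU₁
          · exact hκ x h
        have hU₁W : U₁ ≠ W := fun hE => hxU₁ (hE ▸ hxW)
        have hrank : Module.finrank ℝ (U₁ ⊓ W : Submodule ℝ V) ≤ 1 :=
          inf_rank_le_one h₁2 hm2 hU₁W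
        exact loop_line_contra hrank hkmin hksum hkne
          (fun v hv => ⟨by rw [hU12]; exact hkU₂ v hv, hkW v hv⟩)
    · by_cases hWU2 : W = U₂
      · -- branch (b)
        have hnegxW : -x ∉ W := by rw [hWU2]; exact hnegxU₂
        have hform2 : (((p ++ [x]) ++ k) ++ [-x]) ++ invWord p = ι ++ κ := by
          rw [← hform]
          simp only [List.append_assoc]
        have hrank : Module.finrank ℝ (U₁ ⊓ U₂ : Submodule ℝ V) ≤ 1 :=
          inf_rank_le_one h₁2 (le_of_eq h₂2) hU12
        have hcontra : (∀ v ∈ k, v ∈ U₁) → False := by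
          intro hkU₁
          exact loop_line_contra hrank hkmin hksum hkne
            (fun v hv => ⟨hkU₁ v hv, hkU₂ v hv⟩)
        rcases List.append_eq_append_iff.mp hform2 with ⟨a', ha1, _⟩ | ⟨c', hc1, hc2⟩
        · exact hcontra fun v hv => hι v (by rw [ha1]; simp [hv])
        · rcases c'.eq_nil_or_concat' with rfl | ⟨c'', y, rfl⟩
          · exact hcontra fun v hv => hι v (by
              have : ι = ((p ++ [x]) ++ k) ++ [-x] := by rw [hc1, List.append_nil]
              rw [this]; simp [hv])
          · have hy : y = -x := by
              have h1 : ((((p ++ [x]) ++ k) ++ [-x]) : List V).getLast? = some (-x) :=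
                List.getLast?_concat
              rw [hc1, ← List.append_assoc, List.getLast?_concat] at h1
              exact Option.some_injective _ h1
            have hmem : -x ∈ κ := by rw [hc2, hy]; simp
            exact hnegxW (hκ _ hmem)
      · -- branch (c)
        obtain ⟨k₁, k₂, hk12, hk1, hk2⟩ := split_three hform
        have hrank1 : Module.finrank ℝ (U₁ ⊓ U₂ : Submodule ℝ V) ≤ 1 :=
          inf_rank_le_one h₁2 (le_of_eq h₂2) hU12
        have hrank2 : Module.finrank ℝ (U₂ ⊓ W : Submodule ℝ V) ≤ 1 :=
          inf_rank_le_one h₂2 hm2 (fun h => hWU2 h.symm)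
        refine loop_split_contra hrank1 hrank2 hkmin hksum hkne hk12 ?_ ?_
        · intro v hv
          exact ⟨hι v (hk1 v hv), hkU₂ v (by rw [hk12]; exact List.mem_append_left _ hv)⟩
        · intro v hv
          exact ⟨hkU₂ v (by rw [hk12]; exact List.mem_append_right _ hv), hκ v (hk2 v hv)⟩
  -- STEP II : `U₁ = U₂`
  have hlcU₂ : ∀ v ∈ lc, v ∈ U₂ := by
    rw [hlcdef]
    apply reduce_mem
    intro v hv
    rcases List.mem_append.mp hv with hv1 | hv2
    · rcases List.mem_append.mp hv1 with h | h
      · exact hluU₂ v h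
      · exact hlb₂U v h
    · exact invWord_mem hluU₂ v hv2
  have hU12 : U₁ = U₂ := by
    by_cases hWU2 : W = U₂
    · have hg : PLmk (FreeMonoid.ofList (m ++ invWord lc)) =
          PLmk (FreeMonoid.ofList lb₁) := by
        rw [PLmk_ofList_append, hmfact, mul_assoc, PLmk_mul_inv, mul_one]
      have hE4 : reduce (m ++ invWord lc) = lb₁ := by
        have h6 := reduce_unique hg
        rwa [reduce_eq_self h₁min] at h6
      obtain ⟨ι', κ', hsp, hι', hκ'⟩ :=
        split_reduce (S := W) (T := U₂) m (invWord lc) hmW (invWord_mem hlcU₂)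
      rw [hE4] at hsp
      have hlb₁U₂ : ∀ v ∈ lb₁, v ∈ U₂ := by
        intro v hv
        rw [hsp] at hv
        rcases List.mem_append.mp hv with h | h
        · rw [← hWU2]; exact hι' v h
        · exact hκ' v h
      have hle : U₁ ≤ U₂ := by
        rw [hU₁def]
        exact Submodule.span_le.mpr fun v hv => hlb₁U₂ v hv
      exact Submodule.eq_of_le_of_finrank_le hle (by rw [h₁2, h₂2])
    · by_contra hU12ne
      have hrank1 : Module.finrank ℝ (U₁ ⊓ U₂ : Submodule ℝ V) ≤ 1 :=
        inf_rank_le_one h₁2 (le_of_eq h₂2) hU12ne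
      have hrank2 : Module.finrank ℝ (U₂ ⊓ W : Submodule ℝ V) ≤ 1 :=
        inf_rank_le_one h₂2 hm2 (fun h => hWU2 h.symm)
      exact loop_split_contra hrank1 hrank2 hlcmin hlcsum hlcne hsplit0
        (fun v hv => ⟨hι v hv, hlcU₂ v (by rw [hsplit0]; exact List.mem_append_left _ hv)⟩)
        (fun v hv => ⟨hlcU₂ v (by rw [hsplit0]; exact List.mem_append_right _ hv), hκ v hv⟩)
  refine ⟨hU12, fun v hv => ?_⟩
  rw [hU12]
  exact hluU₂ v hv
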